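/- Let G be an infinite group generated by finite X with Σ = X ∪ X⁻¹, under a symmetric partition of Σ (every call letter has infinite order in G and inverses of calls are responses and vice versa). Then no nonempty finite subset S ⊆ G has visibly pushdown full preimage π⁻¹(S): finite subsets of an infinite group are never VPL^∀. -/

import Mathlib

inductive VKind | call | internal | response
deriving DecidableEq

/-- A (nondeterministic) visibly pushdown automaton over alphabet `A`
partitioned by `kind` into call, internal and response letters. -/
structure VPA (A : Type) (kind : A → VKind) where
  Q : Type
  Γ : Type
  [finQ : Fintype Q]
  [finΓ : Fintype Γ]
  init : Q
  accept : Set Q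
  /-- transitions on call letters: push one symbol, do not inspect the stack -/
  δc : Q → A → Set (Q × Γ)
  /-- transitions on internal letters: do not inspect or modify the stack -/
  δi : Q → A → Set Q
  /-- transitions on response letters: pop the topmost stack symbol -/
  δr : Q → A → Γ → Set Q
  /-- transitions on response letters read on the empty stack (bottom symbol) -/
  δb : Q → A → Set Q

namespace VPA

variable {A : Type} {kind : A → VKind}

inductive Steps (M : VPA A kind) : M.Q × List M.Γ → List A → M.Q × List M.Γ → Prop
  | nil (c) : Steps M c [] c
  | call {q s a q' γ w c} : kind a = .call → (q', γ) ∈ M.δc q a →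
      Steps M (q', γ :: s) w c → Steps M (q, s) (a :: w) c
  | internal {q s a q' w c} : kind a = .internal → q' ∈ M.δi q a →
      Steps M (q', s) w c → Steps M (q, s) (a :: w) c
  | pop {q γ s a q' w c} : kind a = .response → q' ∈ M.δr q a γ →
      Steps M (q', s) w c → Steps M (q, γ :: s) (a :: w) c
  | popEmpty {q a q' w c} : kind a = .response → q' ∈ M.δb q a →
      Steps M (q', []) w c → Steps M (q, []) (a :: w) c

/-- A VPA accepts a word if reading it from the initial state with empty stack
can end in an accepting state (with arbitrary stack contents). -/
def Accepts (M : VPA A kind) (w : List A) : Prop :=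
  ∃ c : M.Q × List M.Γ, M.Steps (M.init, []) w c ∧ c.1 ∈ M.accept

end VPA

/-- `L` is a visibly pushdown language over the partition `kind`. -/
def IsVPL {A : Type} (kind : A → VKind) (L : Set (List A)) : Prop :=
  ∃ M : VPA A kind, L = {w | M.Accepts w}

namespace VPAProof

open VPA

variable {A : Type} {kind : A → VKind}

theorem steps_append {M : VPA A kind} {c₁ c₂ c₃ : M.Q × List M.Γ} {w u : List A}
    (h1 : M.Steps c₁ w c₂) (h2 : M.Steps c₂ u c₃) : M.Steps c₁ (w ++ u) c₃ := by
  induction h1 with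
  | nil => exact h2
  | call h hm _ ih => exact .call h hm (ih h2)
  | internal h hm _ ih => exact .internal h hm (ih h2)
  | pop h hm _ ih => exact .pop h hm (ih h2)
  | popEmpty h hm _ ih => exact .popEmpty h hm (ih h2)

theorem steps_split {M : VPA A kind} {c₁ c₃ : M.Q × List M.Γ} {v : List A}
    (h : M.Steps c₁ v c₃) :
    ∀ w u : List A, v = w ++ u → ∃ c₂, M.Steps c₁ w c₂ ∧ M.Steps c₂ u c₃ := by
  induction h with
  | nil c =>
    intro w u he
    rcases List.append_eq_nil_iff.mp he.symm with ⟨rfl, rfl⟩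
    exact ⟨c, .nil c, .nil c⟩
  | call h hm hs ih =>
    intro w u he
    cases w with
    | nil => cases he; exact ⟨_, .nil _, .call h hm hs⟩
    | cons b w' =>
      simp only [List.cons_append, List.cons.injEq] at he
      obtain ⟨rfl, rfl⟩ := he
      obtain ⟨c₂, h1, h2⟩ := ih w' u rfl
      exact ⟨c₂, .call h hm h1, h2⟩
  | internal h hm hs ih =>
    intro w u he
    cases w with
    | nil => cases he; exact ⟨_, .nil _, .internal h hm hs⟩
    | cons b w' =>
      simp only [List.cons_append, List.cons.injEq] at he
      obtain ⟨rfl, rfl⟩ := he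
      obtain ⟨c₂, h1, h2⟩ := ih w' u rfl
      exact ⟨c₂, .internal h hm h1, h2⟩
  | pop h hm hs ih =>
    intro w u he
    cases w with
    | nil => cases he; exact ⟨_, .nil _, .pop h hm hs⟩
    | cons b w' =>
      simp only [List.cons_append, List.cons.injEq] at he
      obtain ⟨rfl, rfl⟩ := he
      obtain ⟨c₂, h1, h2⟩ := ih w' u rfl
      exact ⟨c₂, .pop h hm h1, h2⟩
  | popEmpty h hm hs ih =>
    intro w u he
    cases w with
    | nil => cases he; exact ⟨_, .nil _, .popEmpty h hm hs⟩
    | cons b w' =>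
      simp only [List.cons_append, List.cons.injEq] at he
      obtain ⟨rfl, rfl⟩ := he
      obtain ⟨c₂, h1, h2⟩ := ih w' u rfl
      exact ⟨c₂, .popEmpty h hm h1, h2⟩

/-- Reading a word with no call letters from an empty stack keeps the stack empty. -/
theorem steps_nocall_empty {M : VPA A kind} {c c' : M.Q × List M.Γ} {w : List A}
    (h : M.Steps c w c') (hc : c.2 = []) (hw : ∀ a ∈ w, kind a ≠ VKind.call) :
    c'.2 = [] := by
  induction h with
  | nil => exact hc
  | @call q s a q' γ w' c h hm hs ih =>
    exact absurd h (hw a List.mem_cons_self)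
  | @internal q s a q' w' c h hm hs ih =>
    exact ih hc (fun b hb => hw b (List.mem_cons_of_mem _ hb))
  | pop h hm hs ih => simp at hc
  | @popEmpty q a q' w' c h hm hs ih =>
    exact ih rfl (fun b hb => hw b (List.mem_cons_of_mem _ hb))

end VPAProof

/-- In an infinite finitely generated group, for a symmetric partition of the
generating alphabet (calls have infinite order, inverses of calls are
responses and vice versa), no nonempty finite subset has visibly pushdown full
preimage. -/
theorem finite_subset_not_VPLforall_symmetric {G : Type} [Group G] [Infinite G]
    {A : Type} [Fintype A] (σ : A → G) (inv : A → A)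
    (hinv : ∀ s : A, σ (inv s) = (σ s)⁻¹)
    (hgen : Subgroup.closure (Set.range σ) = ⊤)
    (kind : A → VKind)
    (hcallInf : ∀ s : A, kind s = VKind.call → ¬ IsOfFinOrder (σ s))
    (hcallResp : ∀ s : A, kind s = VKind.call → kind (inv s) = VKind.response)
    (hrespCall : ∀ s : A, kind s = VKind.response → kind (inv s) = VKind.call)
    (S : Set G) (hfin : S.Finite) (hne : S.Nonempty) :
    ¬ IsVPL kind ((fun w : List A => (w.map σ).prod) ⁻¹' S) := by
  rintro ⟨M, hM⟩
  -- π is surjective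
  have hrevinv : ∀ w : List A, (((w.reverse.map inv).map σ)).prod = ((w.map σ).prod)⁻¹ := by
    intro w
    induction w with
    | nil => simp
    | cons a t ih =>
      rw [List.reverse_cons, List.map_append, List.map_append, List.prod_append, ih]
      simp [hinv, mul_inv_rev]
  have hsurj : ∀ g : G, ∃ w : List A, (w.map σ).prod = g := by
    intro g
    have hg : g ∈ Subgroup.closure (Set.range σ) := hgen ▸ Subgroup.mem_top g
    induction hg using Subgroup.closure_induction with
    | mem x hx => obtain ⟨a, rfl⟩ := hx; exact ⟨[a], by simp⟩
    | one => exact ⟨[], rfl⟩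
    | mul x y _ _ hx hy =>
      obtain ⟨w, rfl⟩ := hx; obtain ⟨u, rfl⟩ := hy; exact ⟨w ++ u, by simp⟩
    | inv x _ hx =>
      obtain ⟨w, rfl⟩ := hx; exact ⟨w.reverse.map inv, hrevinv w⟩
  -- build a sequence of call-free words with pairwise distinct images
  have hkey : ∀ f : ℕ → List A,
      (∀ n, ∀ a ∈ f n, kind a ≠ VKind.call) →
      Function.Injective (fun n => ((f n).map σ).prod) → False := by
    intro f hnc hinj
    haveI : Fintype M.Q := M.finQ
    haveI : Finite (Set M.Q) := by infer_instance
    obtain ⟨R, hR⟩ := Finite.exists_infinite_fiber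
      (fun n => {q : M.Q | M.Steps (M.init, []) (f n) (q, [])})
    set I := _ ⁻¹' {R} with hI
    haveI : Infinite I := hR
    obtain ⟨s, hs⟩ := hne
    obtain ⟨⟨n0, hn0⟩⟩ : Nonempty I := inferInstance
    -- pick u with π(u) = π(f n0)⁻¹ * s
    obtain ⟨u, hu⟩ := hsurj ((((f n0).map σ).prod)⁻¹ * s)
    -- f n0 ++ u is accepted
    have hacc : M.Accepts (f n0 ++ u) := by
      have : (f n0 ++ u) ∈ ((fun w : List A => (w.map σ).prod) ⁻¹' S) := by
        simp only [Set.mem_preimage, List.map_append, List.prod_append, hu]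
        simpa using hs
      rw [hM] at this
      exact this
    obtain ⟨c, hsteps, haccst⟩ := hacc
    obtain ⟨c₂, h1, h2⟩ := VPAProof.steps_split hsteps (f n0) u rfl
    have hc2 : c₂.2 = [] := VPAProof.steps_nocall_empty h1 rfl (hnc n0)
    obtain ⟨q, st⟩ := c₂
    simp only at hc2
    subst hc2
    have hqR : q ∈ R := by
      have : n0 ∈ I := hn0
      have hRn0 : {q : M.Q | M.Steps (M.init, []) (f n0) (q, [])} = R := this
      rw [← hRn0]; exact h1
    -- now every n ∈ I gives an element of S
    have hmem : ∀ n : I, ((f n.1).map σ).prod * (((f n0).map σ).prod)⁻¹ * s ∈ S := by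
      rintro ⟨n, hn⟩
      have hqn : M.Steps (M.init, []) (f n) (q, []) := by
        have hRn : {q : M.Q | M.Steps (M.init, []) (f n) (q, [])} = R := hn
        have : q ∈ {q : M.Q | M.Steps (M.init, []) (f n) (q, [])} := by rw [hRn]; exact hqR
        exact this
      have : M.Accepts (f n ++ u) := ⟨c, VPAProof.steps_append hqn h2, haccst⟩
      have hmem' : (f n ++ u) ∈ ((fun w : List A => (w.map σ).prod) ⁻¹' S) := by
        rw [hM]; exact this
      simpa [hu, mul_assoc] using hmem'
    have : S.Infinite := Set.infinite_of_injective_forall_mem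
      (f := fun n : I => ((f n.1).map σ).prod * (((f n0).map σ).prod)⁻¹ * s)
      (fun n m hnm => Subtype.ext (hinj (mul_right_cancel (mul_right_cancel hnm))))
      hmem
    exact this hfin
  by_cases hcall : ∃ a : A, kind a = VKind.call
  · obtain ⟨x, hx⟩ := hcall
    have hy : kind (inv x) = VKind.response := hcallResp x hx
    have hord : ¬ IsOfFinOrder ((σ x)⁻¹) := by
      rw [isOfFinOrder_inv_iff]; exact hcallInf x hx
    refine hkey (fun n => List.replicate n (inv x)) ?_ ?_
    · intro n a ha
      rw [List.eq_of_mem_replicate ha, hy]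
      simp
    · intro n m hnm
      simp only [List.map_replicate, List.prod_replicate, hinv] at hnm
      exact injective_pow_iff_not_isOfFinOrder.mpr hord hnm
  · -- no call letters at all
    let e := Infinite.natEmbedding G
    refine hkey (fun n => (hsurj (e n)).choose) ?_ ?_
    · intro n a _
      exact fun h => hcall ⟨a, h⟩
    · intro n m hnm
      apply e.injective
      rw [← (hsurj (e n)).choose_spec, ← (hsurj (e m)).choose_spec]
      exact hnm
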